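/- Let h : I → ℝ be a C² diffeomorphism of an open interval such that 1/√|h'| is convex on I. Then κ_h(a,b,c,d) ≥ 1 whenever (b-a)(d-c) > 0, i.e., ρ_h(a,b,c,d) := log κ_h(a,b,c,d)/((b-a)(d-c)) ≥ 0 for all distinct points a,b,c,d in I. -/

import Mathlib

open Set Real Filter

/-- Cross-ratio of four points. -/
noncomputable def chi (a b c d : ℝ) : ℝ := ((c - b) * (d - a)) / ((c - a) * (d - b))

/-- Distortion of the cross-ratio by a map `h`. -/
noncomputable def kappa (h : ℝ → ℝ) (a b c d : ℝ) : ℝ :=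
  chi (h a) (h b) (h c) (h d) / chi a b c d

namespace KappaAux

/-- logarithm of the difference quotient -/
noncomputable def FF (h : ℝ → ℝ) (x y : ℝ) : ℝ := Real.log ((h y - h x) / (y - x))

variable {p q : ℝ} {h : ℝ → ℝ}

lemma der1 (hC2 : ContDiffOn ℝ 2 h (Set.Ioo p q)) {x : ℝ} (hx : x ∈ Set.Ioo p q) :
    HasDerivAt h (deriv h x) x :=
  ((hC2.differentiableOn (by norm_num)).differentiableAt
    (isOpen_Ioo.mem_nhds hx)).hasDerivAt

lemma hC1' (hC2 : ContDiffOn ℝ 2 h (Set.Ioo p q)) :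
    ContDiffOn ℝ 1 (deriv h) (Set.Ioo p q) :=
  hC2.deriv_of_isOpen isOpen_Ioo (by norm_num)

lemma conth' (hC2 : ContDiffOn ℝ 2 h (Set.Ioo p q)) :
    ContinuousOn (deriv h) (Set.Ioo p q) :=
  (hC1' hC2).continuousOn

lemma der2 (hC2 : ContDiffOn ℝ 2 h (Set.Ioo p q)) {x : ℝ} (hx : x ∈ Set.Ioo p q) :
    HasDerivAt (deriv h) (deriv (deriv h) x) x :=
  (((hC1' hC2).differentiableOn (by norm_num)).differentiableAt
    (isOpen_Ioo.mem_nhds hx)).hasDerivAt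

lemma conth'' (hC2 : ContDiffOn ℝ 2 h (Set.Ioo p q)) :
    ContinuousOn (deriv (deriv h)) (Set.Ioo p q) :=
  (hC1' hC2).continuousOn_deriv_of_isOpen isOpen_Ioo le_rfl

lemma hmono (hC2 : ContDiffOn ℝ 2 h (Set.Ioo p q))
    (hpos : ∀ x ∈ Set.Ioo p q, 0 < deriv h x) : StrictMonoOn h (Set.Ioo p q) :=
  strictMonoOn_of_deriv_pos (convex_Ioo p q) hC2.continuousOn
    (fun x hx => hpos x (by rwa [interior_Ioo] at hx))

lemma hdne (hC2 : ContDiffOn ℝ 2 h (Set.Ioo p q))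
    (hpos : ∀ x ∈ Set.Ioo p q, 0 < deriv h x) {x y : ℝ} (hx : x ∈ Set.Ioo p q)
    (hy : y ∈ Set.Ioo p q) (hne : x ≠ y) : h y - h x ≠ 0 :=
  sub_ne_zero.2 ((hmono hC2 hpos).injOn.ne hy hx (Ne.symm hne))

/-- The key inequality coming from convexity of `1/√h'`. -/
lemma keyA (hC2 : ContDiffOn ℝ 2 h (Set.Ioo p q))
    (hpos : ∀ x ∈ Set.Ioo p q, 0 < deriv h x)
    (hconv : ConvexOn ℝ (Set.Ioo p q) (fun x => 1 / Real.sqrt |deriv h x|))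
    {x y : ℝ} (hx : x ∈ Set.Ioo p q) (hy : y ∈ Set.Ioo p q) (hxy : x < y) :
    (y - x) * Real.sqrt (deriv h x * deriv h y) ≤ h y - h x := by
  have hyx : 0 < y - x := sub_pos.2 hxy
  set u : ℝ → ℝ := fun t => 1 / Real.sqrt |deriv h t| with hu
  have hconvu : ConvexOn ℝ (Set.Ioo p q) u := hconv
  have hsub : Set.Icc x y ⊆ Set.Ioo p q := Set.Icc_subset_Ioo hx.1 hy.2
  have hsub' : Set.uIcc x y ⊆ Set.Ioo p q := by rwa [Set.uIcc_of_le hxy.le]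
  have hupos : ∀ t ∈ Set.Ioo p q, 0 < u t := fun t ht =>
    one_div_pos.2 (Real.sqrt_pos.2 (abs_pos.2 (hpos t ht).ne'))
  have hu2 : ∀ t ∈ Set.Ioo p q, deriv h t = ((u t) ^ 2)⁻¹ := by
    intro t ht
    have h1 : Real.sqrt |deriv h t| ^ 2 = deriv h t := by
      rw [abs_of_pos (hpos t ht)]; exact Real.sq_sqrt (hpos t ht).le
    simp only [hu, one_div, inv_pow, inv_inv]
    exact h1.symm
  set A : ℝ := u x with hA
  set B : ℝ := u y with hB
  have hApos : 0 < A := hupos x hx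
  have hBpos : 0 < B := hupos y hy
  set m : ℝ := (B - A) / (y - x) with hm
  set L : ℝ → ℝ := fun t => A + (t - x) * m with hL
  have hLx : L x = A := by simp [hL]
  have hLy : L y = B := by
    simp only [hL, hm]; field_simp; ring
  have hconvL : ∀ t ∈ Set.Icc x y, u t ≤ L t := by
    intro t ht
    have l1 : 0 ≤ (y - t) / (y - x) := div_nonneg (sub_nonneg.2 ht.2) hyx.le
    have l2 : 0 ≤ (t - x) / (y - x) := div_nonneg (sub_nonneg.2 ht.1) hyx.le
    have lsum : (y - t) / (y - x) + (t - x) / (y - x) = 1 := by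
      field_simp
      ring
    have hcc := hconvu.2 hx hy l1 l2 lsum
    have harg : ((y - t) / (y - x)) • x + ((t - x) / (y - x)) • y = t := by
      simp only [smul_eq_mul]; field_simp; ring
    rw [harg] at hcc
    refine hcc.trans_eq ?_
    simp only [smul_eq_mul, hL, hm]
    field_simp
    ring
  have hLpos : ∀ t ∈ Set.Icc x y, 0 < L t := fun t ht =>
    lt_of_lt_of_le (hupos t (hsub ht)) (hconvL t ht)
  have hLder : ∀ t : ℝ, HasDerivAt L m t := fun t => by
    simpa [hL] using (((hasDerivAt_id t).sub_const x).mul_const m).const_add A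
  have hLcont : Continuous L := by
    have : ∀ t, HasDerivAt L m t := hLder
    exact (continuous_const.add ((continuous_id.sub continuous_const).mul continuous_const))
  -- the comparison function Φ
  set Φ : ℝ → ℝ := fun t => (t - x) / (A * L t) with hΦ
  have hΦder : ∀ t ∈ Set.Icc x y, HasDerivAt Φ (((L t) ^ 2)⁻¹) t := by
    intro t ht
    have hden : A * L t ≠ 0 := (mul_pos hApos (hLpos t ht)).ne'
    have hd1 : HasDerivAt (fun s : ℝ => s - x) 1 t := (hasDerivAt_id t).sub_const x
    have hd2 : HasDerivAt (fun s : ℝ => A * L s) (A * m) t := (hLder t).const_mul A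
    have := hd1.div hd2 hden
    refine this.congr_deriv ?_
    have hLt : L t ≠ 0 := (hLpos t ht).ne'
    simp only [hL]
    field_simp
    ring
  have hFTC2 : ∫ t in x..y, ((L t) ^ 2)⁻¹ = (y - x) / (A * B) := by
    have hint : IntervalIntegrable (fun t => ((L t) ^ 2)⁻¹) MeasureTheory.volume x y := by
      apply ContinuousOn.intervalIntegrable
      apply ContinuousOn.inv₀
      · exact (hLcont.continuousOn.pow 2)
      · intro t ht
        rw [Set.uIcc_of_le hxy.le] at ht
        exact (pow_pos (hLpos t ht) 2).ne'
    have := intervalIntegral.integral_eq_sub_of_hasDerivAt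
      (f := Φ) (f' := fun t => ((L t) ^ 2)⁻¹)
      (fun t ht => hΦder t (by rwa [Set.uIcc_of_le hxy.le] at ht)) hint
    rw [this]
    simp only [hΦ, hLx, hLy]
    field_simp
    ring
  have hFTC1 : ∫ t in x..y, deriv h t = h y - h x := by
    apply intervalIntegral.integral_eq_sub_of_hasDerivAt
    · exact fun t ht => der1 hC2 (hsub' ht)
    · exact ((conth' hC2).mono hsub').intervalIntegrable
  have hmonoInt : ∫ t in x..y, ((L t) ^ 2)⁻¹ ≤ ∫ t in x..y, deriv h t := by
    apply intervalIntegral.integral_mono_on hxy.le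
    · apply ContinuousOn.intervalIntegrable
      apply ContinuousOn.inv₀
      · exact (hLcont.continuousOn.pow 2)
      · intro t ht
        rw [Set.uIcc_of_le hxy.le] at ht
        exact (pow_pos (hLpos t ht) 2).ne'
    · exact ((conth' hC2).mono hsub').intervalIntegrable
    · intro t ht
      rw [hu2 t (hsub ht)]
      have h1 : 0 < u t := hupos t (hsub ht)
      have h2 : u t ≤ L t := hconvL t ht
      have : u t ^ 2 ≤ L t ^ 2 := pow_le_pow_left₀ h1.le h2 2
      exact inv_anti₀ (pow_pos h1 2) this
  have hfin : (y - x) / (A * B) ≤ h y - h x := by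
    rw [← hFTC2, ← hFTC1]; exact hmonoInt
  have heq : (y - x) * Real.sqrt (deriv h x * deriv h y) = (y - x) / (A * B) := by
    have sx : Real.sqrt |deriv h x| = Real.sqrt (deriv h x) := by
      rw [abs_of_pos (hpos x hx)]
    have sy : Real.sqrt |deriv h y| = Real.sqrt (deriv h y) := by
      rw [abs_of_pos (hpos y hy)]
    have sxne : Real.sqrt (deriv h x) ≠ 0 := (Real.sqrt_pos.2 (hpos x hx)).ne'
    have syne : Real.sqrt (deriv h y) ≠ 0 := (Real.sqrt_pos.2 (hpos y hy)).ne'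
    rw [Real.sqrt_mul (hpos x hx).le, hA, hB]
    simp only [hu, sx, sy]
    field_simp
  rw [heq]; exact hfin

/-- squared version, valid for all pairs -/
lemma keyA2 (hC2 : ContDiffOn ℝ 2 h (Set.Ioo p q))
    (hpos : ∀ x ∈ Set.Ioo p q, 0 < deriv h x)
    (hconv : ConvexOn ℝ (Set.Ioo p q) (fun x => 1 / Real.sqrt |deriv h x|))
    {x y : ℝ} (hx : x ∈ Set.Ioo p q) (hy : y ∈ Set.Ioo p q) :
    deriv h x * deriv h y * (y - x) ^ 2 ≤ (h y - h x) ^ 2 := by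
  have dx := hpos x hx
  have dy := hpos y hy
  rcases lt_trichotomy x y with hlt | heq | hgt
  · have h1 := keyA hC2 hpos hconv hx hy hlt
    have h0 : 0 ≤ (y - x) * Real.sqrt (deriv h x * deriv h y) :=
      mul_nonneg (sub_nonneg.2 hlt.le) (Real.sqrt_nonneg _)
    have h2 := pow_le_pow_left₀ h0 h1 2
    have e : ((y - x) * Real.sqrt (deriv h x * deriv h y)) ^ 2
        = deriv h x * deriv h y * (y - x) ^ 2 := by
      rw [mul_pow, Real.sq_sqrt (mul_pos dx dy).le]; ring
    linarith
  · simp [heq]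
  · have h1 := keyA hC2 hpos hconv hy hx hgt
    have h0 : 0 ≤ (x - y) * Real.sqrt (deriv h y * deriv h x) :=
      mul_nonneg (sub_nonneg.2 hgt.le) (Real.sqrt_nonneg _)
    have h2 := pow_le_pow_left₀ h0 h1 2
    have e : ((x - y) * Real.sqrt (deriv h y * deriv h x)) ^ 2
        = deriv h x * deriv h y * (y - x) ^ 2 := by
      rw [mul_pow, Real.sq_sqrt (mul_pos dy dx).le]; ring
    have e2 : (h x - h y) ^ 2 = (h y - h x) ^ 2 := by ring
    linarith

/- ### gluing lemmas -/

lemma helperB {f : ℝ → ℝ} {c t L : ℝ} (hct : c < t)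
    (hcont : ContinuousOn f (Set.Ico c t))
    (hdiff : ∀ x ∈ Set.Ioo c t, DifferentiableAt ℝ f x)
    (hd0 : ∀ x ∈ Set.Ioo c t, deriv f x ≤ 0)
    (hlim : Tendsto f (nhdsWithin t (Set.Iio t)) (nhds L)) : L ≤ f c := by
  have hanti : AntitoneOn f (Set.Ico c t) := by
    apply antitoneOn_of_deriv_nonpos (convex_Ico c t) hcont
    · intro x hx
      rw [interior_Ico] at hx
      exact (hdiff x hx).differentiableWithinAt
    · intro x hx
      rw [interior_Ico] at hx
      exact hd0 x hx
  have hev : ∀ᶠ x in nhdsWithin t (Set.Iio t), f x ≤ f c := by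
    filter_upwards [Ico_mem_nhdsLT_of_mem (Set.mem_Ioc.2 ⟨hct, le_refl t⟩)] with x hx
    exact hanti (Set.left_mem_Ico.2 hct) hx hx.1
  exact le_of_tendsto hlim hev

lemma helperC {f : ℝ → ℝ} {t d L : ℝ} (htd : t < d)
    (hcont : ContinuousOn f (Set.Ioc t d))
    (hdiff : ∀ x ∈ Set.Ioo t d, DifferentiableAt ℝ f x)
    (hd0 : ∀ x ∈ Set.Ioo t d, deriv f x ≤ 0)
    (hlim : Tendsto f (nhdsWithin t (Set.Ioi t)) (nhds L)) : f d ≤ L := by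
  have hanti : AntitoneOn f (Set.Ioc t d) := by
    apply antitoneOn_of_deriv_nonpos (convex_Ioc t d) hcont
    · intro x hx
      rw [interior_Ioc] at hx
      exact (hdiff x hx).differentiableWithinAt
    · intro x hx
      rw [interior_Ioc] at hx
      exact hd0 x hx
  have hev : ∀ᶠ x in nhdsWithin t (Set.Ioi t), f d ≤ f x := by
    filter_upwards [Ioc_mem_nhdsGT_of_mem (Set.mem_Ico.2 ⟨le_refl t, htd⟩)] with x hx
    exact hanti hx (Set.right_mem_Ioc.2 htd) hx.2
  exact ge_of_tendsto hlim hev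

lemma helperA {f : ℝ → ℝ} {c d : ℝ} (hcd : c < d)
    (hcont : ContinuousOn f (Set.Icc c d))
    (hdiff : ∀ x ∈ Set.Ioo c d, DifferentiableAt ℝ f x)
    (hd0 : ∀ x ∈ Set.Ioo c d, deriv f x ≤ 0) : f d ≤ f c := by
  have hanti : AntitoneOn f (Set.Icc c d) := by
    apply antitoneOn_of_deriv_nonpos (convex_Icc c d) hcont
    · intro x hx
      rw [interior_Icc] at hx
      exact (hdiff x hx).differentiableWithinAt
    · intro x hx
      rw [interior_Icc] at hx
      exact hd0 x hx
  exact hanti (Set.left_mem_Icc.2 hcd.le) (Set.right_mem_Icc.2 hcd.le) hcd.le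

/-- `f` decreases on `[c,d]` if its derivative is `≤ 0` away from two
possibly-singular points `t₁ < t₂`, at which `f` has limits. -/
lemma anti2 {f : ℝ → ℝ} {c d t₁ t₂ : ℝ} (hcd : c < d) (h12 : t₁ < t₂)
    (hc1 : c ≠ t₁) (hc2 : c ≠ t₂) (hd1 : d ≠ t₁) (hd2 : d ≠ t₂)
    (hcont : ∀ x ∈ Set.Icc c d, x ≠ t₁ → x ≠ t₂ → ContinuousAt f x)
    (hdiff : ∀ x ∈ Set.Ioo c d, x ≠ t₁ → x ≠ t₂ → DifferentiableAt ℝ f x)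
    (hd0 : ∀ x ∈ Set.Ioo c d, x ≠ t₁ → x ≠ t₂ → deriv f x ≤ 0)
    (hL1 : t₁ ∈ Set.Ioo c d → ∃ L, Tendsto f (nhdsWithin t₁ {t₁}ᶜ) (nhds L))
    (hL2 : t₂ ∈ Set.Ioo c d → ∃ L, Tendsto f (nhdsWithin t₂ {t₂}ᶜ) (nhds L)) :
    f d ≤ f c := by
  -- a clean-segment move
  have move : ∀ u v : ℝ, u < v → Set.Icc u v ⊆ Set.Icc c d →
      t₁ ∉ Set.Icc u v → t₂ ∉ Set.Icc u v → f v ≤ f u := by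
    intro u v huv hsub h1 h2
    refine helperA huv ?_ ?_ ?_
    · intro x hx
      exact (hcont x (hsub hx) (fun e => h1 (e ▸ hx)) (fun e => h2 (e ▸ hx))).continuousWithinAt
    · intro x hx
      have hx' : x ∈ Set.Icc u v := Set.Ioo_subset_Icc_self hx
      have hxcd : x ∈ Set.Ioo c d :=
        ⟨lt_of_le_of_lt (hsub (Set.left_mem_Icc.2 huv.le)).1 hx.1,
         lt_of_lt_of_le hx.2 (hsub (Set.right_mem_Icc.2 huv.le)).2⟩
      exact hdiff x hxcd (fun e => h1 (e ▸ hx')) (fun e => h2 (e ▸ hx'))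
    · intro x hx
      have hx' : x ∈ Set.Icc u v := Set.Ioo_subset_Icc_self hx
      have hxcd : x ∈ Set.Ioo c d :=
        ⟨lt_of_le_of_lt (hsub (Set.left_mem_Icc.2 huv.le)).1 hx.1,
         lt_of_lt_of_le hx.2 (hsub (Set.right_mem_Icc.2 huv.le)).2⟩
      exact hd0 x hxcd (fun e => h1 (e ▸ hx')) (fun e => h2 (e ▸ hx'))
  -- move ending at a singular point from the left
  have moveB : ∀ u t L : ℝ, u < t → Set.Icc u t ⊆ Set.Icc c d →
      t₁ ∉ Set.Ico u t → t₂ ∉ Set.Ico u t →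
      Tendsto f (nhdsWithin t {t}ᶜ) (nhds L) → L ≤ f u := by
    intro u t L hut hsub h1 h2 hlim
    refine helperB hut ?_ ?_ ?_ (hlim.mono_left (nhdsWithin_mono _ (fun x hx => ne_of_lt hx)))
    · intro x hx
      have hx' : x ∈ Set.Icc c d := hsub (Set.Ico_subset_Icc_self hx)
      exact (hcont x hx' (fun e => h1 (e ▸ hx)) (fun e => h2 (e ▸ hx))).continuousWithinAt
    · intro x hx
      have hxi : x ∈ Set.Ico u t := Set.Ioo_subset_Ico_self hx
      have hxcd : x ∈ Set.Ioo c d :=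
        ⟨lt_of_le_of_lt (hsub (Set.left_mem_Icc.2 hut.le)).1 hx.1,
         lt_of_lt_of_le hx.2 (hsub (Set.right_mem_Icc.2 hut.le)).2⟩
      exact hdiff x hxcd (fun e => h1 (e ▸ hxi)) (fun e => h2 (e ▸ hxi))
    · intro x hx
      have hxi : x ∈ Set.Ico u t := Set.Ioo_subset_Ico_self hx
      have hxcd : x ∈ Set.Ioo c d :=
        ⟨lt_of_le_of_lt (hsub (Set.left_mem_Icc.2 hut.le)).1 hx.1,
         lt_of_lt_of_le hx.2 (hsub (Set.right_mem_Icc.2 hut.le)).2⟩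
      exact hd0 x hxcd (fun e => h1 (e ▸ hxi)) (fun e => h2 (e ▸ hxi))
  have moveC : ∀ t v L : ℝ, t < v → Set.Icc t v ⊆ Set.Icc c d →
      t₁ ∉ Set.Ioc t v → t₂ ∉ Set.Ioc t v →
      Tendsto f (nhdsWithin t {t}ᶜ) (nhds L) → f v ≤ L := by
    intro t v L htv hsub h1 h2 hlim
    refine helperC htv ?_ ?_ ?_ (hlim.mono_left (nhdsWithin_mono _ (fun x hx => ne_of_gt hx)))
    · intro x hx
      have hx' : x ∈ Set.Icc c d := hsub (Set.Ioc_subset_Icc_self hx)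
      exact (hcont x hx' (fun e => h1 (e ▸ hx)) (fun e => h2 (e ▸ hx))).continuousWithinAt
    · intro x hx
      have hxi : x ∈ Set.Ioc t v := Set.Ioo_subset_Ioc_self hx
      have hxcd : x ∈ Set.Ioo c d :=
        ⟨lt_of_le_of_lt (hsub (Set.left_mem_Icc.2 htv.le)).1 hx.1,
         lt_of_lt_of_le hx.2 (hsub (Set.right_mem_Icc.2 htv.le)).2⟩
      exact hdiff x hxcd (fun e => h1 (e ▸ hxi)) (fun e => h2 (e ▸ hxi))
    · intro x hx
      have hxi : x ∈ Set.Ioc t v := Set.Ioo_subset_Ioc_self hx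
      have hxcd : x ∈ Set.Ioo c d :=
        ⟨lt_of_le_of_lt (hsub (Set.left_mem_Icc.2 htv.le)).1 hx.1,
         lt_of_lt_of_le hx.2 (hsub (Set.right_mem_Icc.2 htv.le)).2⟩
      exact hd0 x hxcd (fun e => h1 (e ▸ hxi)) (fun e => h2 (e ▸ hxi))
  by_cases h1in : t₁ ∈ Set.Ioo c d <;> by_cases h2in : t₂ ∈ Set.Ioo c d
  · -- both singular points inside
    obtain ⟨L1, hLim1⟩ := hL1 h1in
    obtain ⟨L2, hLim2⟩ := hL2 h2in
    set mm : ℝ := (t₁ + t₂) / 2 with hmm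
    have hm1 : t₁ < mm := by rw [hmm]; linarith
    have hm2 : mm < t₂ := by rw [hmm]; linarith
    have s1 : f d ≤ L2 := by
      refine moveC t₂ d L2 (lt_of_le_of_ne h2in.2.le (Ne.symm hd2)) ?_ ?_ ?_ hLim2
      · exact Set.Icc_subset_Icc h2in.1.le le_rfl
      · intro hx; exact absurd hx.1 (not_lt.2 h12.le)
      · intro hx; exact absurd hx.1 (lt_irrefl t₂)
    have s2 : L2 ≤ f mm := by
      refine moveB mm t₂ L2 hm2 ?_ ?_ ?_ hLim2
      · exact Set.Icc_subset_Icc (h1in.1.le.trans hm1.le) h2in.2.le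
      · intro hx; exact absurd hx.1 (not_le.2 hm1)
      · intro hx; exact absurd hx.2 (lt_irrefl t₂)
    have s3 : f mm ≤ L1 := by
      refine moveC t₁ mm L1 hm1 ?_ ?_ ?_ hLim1
      · exact Set.Icc_subset_Icc h1in.1.le (hm2.le.trans h2in.2.le)
      · intro hx; exact absurd hx.1 (lt_irrefl t₁)
      · intro hx; exact absurd hx.2 (not_le.2 hm2)
    have s4 : L1 ≤ f c := by
      refine moveB c t₁ L1 (lt_of_le_of_ne h1in.1.le hc1) ?_ ?_ ?_ hLim1
      · exact Set.Icc_subset_Icc le_rfl h1in.2.le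
      · intro hx; exact absurd hx.2 (lt_irrefl t₁)
      · intro hx; exact absurd hx.2 (not_lt.2 h12.le)
    linarith
  · -- only t₁ inside
    obtain ⟨L1, hLim1⟩ := hL1 h1in
    have ht2out : ∀ x ∈ Set.Icc c d, x ≠ t₂ := by
      intro x hx he
      apply h2in
      rcases lt_trichotomy t₂ c with hlt | heq | hgt
      · exact absurd (he ▸ hx.1) (not_le.2 hlt)
      · exact absurd heq.symm hc2
      · rcases lt_trichotomy t₂ d with hlt' | heq' | hgt'
        · exact ⟨hgt, hlt'⟩
        · exact absurd heq' (Ne.symm (Ne.symm hd2)).symm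
        · exact absurd (he ▸ hx.2) (not_le.2 hgt')
    have s1 : f d ≤ L1 := by
      refine moveC t₁ d L1 (lt_of_le_of_ne h1in.2.le (Ne.symm hd1)) ?_ ?_ ?_ hLim1
      · exact Set.Icc_subset_Icc h1in.1.le le_rfl
      · intro hx; exact absurd hx.1 (lt_irrefl t₁)
      · intro hx
        exact ht2out t₂ (Set.Icc_subset_Icc h1in.1.le le_rfl (Set.Ioc_subset_Icc_self hx)) rfl
    have s2 : L1 ≤ f c := by
      refine moveB c t₁ L1 (lt_of_le_of_ne h1in.1.le hc1) ?_ ?_ ?_ hLim1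
      · exact Set.Icc_subset_Icc le_rfl h1in.2.le
      · intro hx; exact absurd hx.2 (lt_irrefl t₁)
      · intro hx
        exact ht2out t₂ (Set.Icc_subset_Icc le_rfl h1in.2.le (Set.Ico_subset_Icc_self hx)) rfl
    linarith
  · -- only t₂ inside
    obtain ⟨L2, hLim2⟩ := hL2 h2in
    have ht1out : ∀ x ∈ Set.Icc c d, x ≠ t₁ := by
      intro x hx he
      apply h1in
      rcases lt_trichotomy t₁ c with hlt | heq | hgt
      · exact absurd (he ▸ hx.1) (not_le.2 hlt)
      · exact absurd heq.symm hc1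
      · rcases lt_trichotomy t₁ d with hlt' | heq' | hgt'
        · exact ⟨hgt, hlt'⟩
        · exact absurd heq'.symm hd1
        · exact absurd (he ▸ hx.2) (not_le.2 hgt')
    have s1 : f d ≤ L2 := by
      refine moveC t₂ d L2 (lt_of_le_of_ne h2in.2.le (Ne.symm hd2)) ?_ ?_ ?_ hLim2
      · exact Set.Icc_subset_Icc h2in.1.le le_rfl
      · intro hx
        exact ht1out t₁ (Set.Icc_subset_Icc h2in.1.le le_rfl (Set.Ioc_subset_Icc_self hx)) rfl
      · intro hx; exact absurd hx.1 (lt_irrefl t₂)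
    have s2 : L2 ≤ f c := by
      refine moveB c t₂ L2 (lt_of_le_of_ne h2in.1.le hc2) ?_ ?_ ?_ hLim2
      · exact Set.Icc_subset_Icc le_rfl h2in.2.le
      · intro hx
        exact ht1out t₁ (Set.Icc_subset_Icc le_rfl h2in.2.le (Set.Ico_subset_Icc_self hx)) rfl
      · intro hx; exact absurd hx.2 (lt_irrefl t₂)
    linarith
  · -- neither inside
    have ht1out : ∀ x ∈ Set.Icc c d, x ≠ t₁ := by
      intro x hx he
      apply h1in
      rcases lt_trichotomy t₁ c with hlt | heq | hgt
      · exact absurd (he ▸ hx.1) (not_le.2 hlt)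
      · exact absurd heq.symm hc1
      · rcases lt_trichotomy t₁ d with hlt' | heq' | hgt'
        · exact ⟨hgt, hlt'⟩
        · exact absurd heq'.symm hd1
        · exact absurd (he ▸ hx.2) (not_le.2 hgt')
    have ht2out : ∀ x ∈ Set.Icc c d, x ≠ t₂ := by
      intro x hx he
      apply h2in
      rcases lt_trichotomy t₂ c with hlt | heq | hgt
      · exact absurd (he ▸ hx.1) (not_le.2 hlt)
      · exact absurd heq.symm hc2
      · rcases lt_trichotomy t₂ d with hlt' | heq' | hgt'
        · exact ⟨hgt, hlt'⟩
        · exact absurd heq'.symm hd2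
        · exact absurd (he ▸ hx.2) (not_le.2 hgt')
    refine move c d hcd le_rfl.subset ?_ ?_
    · intro hx; exact ht1out t₁ hx rfl
    · intro hx; exact ht2out t₂ hx rfl

/-- The removable-singularity limit of the partial derivative of `FF`. -/
lemma psi_tendsto (hC2 : ContDiffOn ℝ 2 h (Set.Ioo p q))
    (hpos : ∀ x ∈ Set.Ioo p q, 0 < deriv h x)
    {y : ℝ} (hy : y ∈ Set.Ioo p q) :
    Tendsto (fun x => deriv h y / (h y - h x) - 1 / (y - x)) (nhdsWithin y {y}ᶜ)
      (nhds (deriv (deriv h) y / (2 * deriv h y))) := by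
  set h2f : ℝ → ℝ := deriv (deriv h) with hh2
  set N : ℝ → ℝ := fun x => deriv h y * (y - x) - (h y - h x) with hN
  set D : ℝ → ℝ := fun x => (h y - h x) * (y - x) with hD
  set N' : ℝ → ℝ := fun x => deriv h x - deriv h y with hN'
  set D' : ℝ → ℝ := fun x => -(deriv h x * (y - x)) - (h y - h x) with hD'
  set D'' : ℝ → ℝ := fun x => 2 * deriv h x - h2f x * (y - x) with hD''
  have hIy : Set.Ioo p q ∈ nhds y := isOpen_Ioo.mem_nhds hy
  have hIy' : ∀ᶠ x in nhdsWithin y {y}ᶜ, x ∈ Set.Ioo p q ∧ x ≠ y := by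
    have e1 : ∀ᶠ x in nhdsWithin y {y}ᶜ, x ∈ Set.Ioo p q :=
      eventually_nhdsWithin_of_eventually_nhds (eventually_of_mem hIy (fun x hx => hx))
    have e2 : ∀ᶠ x in nhdsWithin y {y}ᶜ, x ∈ ({y}ᶜ : Set ℝ) := eventually_mem_nhdsWithin
    filter_upwards [e1, e2] with x hx1 hx2
    exact ⟨hx1, hx2⟩
  have base : Tendsto (fun x : ℝ => x) (nhdsWithin y {y}ᶜ) (nhds y) :=
    tendsto_id.mono_left nhdsWithin_le_nhds
  have tcont : ∀ g : ℝ → ℝ, ContinuousOn g (Set.Ioo p q) →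
      Tendsto g (nhdsWithin y {y}ᶜ) (nhds (g y)) := fun g hg =>
    ((hg.continuousAt hIy).tendsto).mono_left nhdsWithin_le_nhds
  have hth : Tendsto h (nhdsWithin y {y}ᶜ) (nhds (h y)) := tcont h hC2.continuousOn
  have hth' : Tendsto (deriv h) (nhdsWithin y {y}ᶜ) (nhds (deriv h y)) :=
    tcont (deriv h) (conth' hC2)
  have hth'' : Tendsto h2f (nhdsWithin y {y}ᶜ) (nhds (h2f y)) := tcont h2f (conth'' hC2)
  have tN : Tendsto N (nhdsWithin y {y}ᶜ) (nhds 0) := by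
    have t : Tendsto (fun x => deriv h y * (y - x) - (h y - h x)) (nhdsWithin y {y}ᶜ)
        (nhds (deriv h y * (y - y) - (h y - h y))) :=
      (tendsto_const_nhds.mul (tendsto_const_nhds.sub base)).sub
        (tendsto_const_nhds.sub hth)
    simpa using t
  have tD : Tendsto D (nhdsWithin y {y}ᶜ) (nhds 0) := by
    have t : Tendsto (fun x => (h y - h x) * (y - x)) (nhdsWithin y {y}ᶜ)
        (nhds ((h y - h y) * (y - y))) :=
      (tendsto_const_nhds.sub hth).mul (tendsto_const_nhds.sub base)
    simpa using t
  have tN' : Tendsto N' (nhdsWithin y {y}ᶜ) (nhds 0) := by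
    have t : Tendsto (fun x => deriv h x - deriv h y) (nhdsWithin y {y}ᶜ)
        (nhds (deriv h y - deriv h y)) := hth'.sub tendsto_const_nhds
    simpa using t
  have tD' : Tendsto D' (nhdsWithin y {y}ᶜ) (nhds 0) := by
    have t : Tendsto (fun x => -(deriv h x * (y - x)) - (h y - h x)) (nhdsWithin y {y}ᶜ)
        (nhds (-(deriv h y * (y - y)) - (h y - h y))) :=
      ((hth'.mul (tendsto_const_nhds.sub base)).neg).sub (tendsto_const_nhds.sub hth)
    simpa using t
  have tD''y : Tendsto D'' (nhdsWithin y {y}ᶜ) (nhds (2 * deriv h y)) := by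
    have t : Tendsto (fun x => 2 * deriv h x - h2f x * (y - x)) (nhdsWithin y {y}ᶜ)
        (nhds (2 * deriv h y - h2f y * (y - y))) :=
      (tendsto_const_nhds.mul hth').sub (hth''.mul (tendsto_const_nhds.sub base))
    simpa using t
  have h2dy : (0:ℝ) < 2 * deriv h y := by linarith [hpos y hy]
  have tquot : Tendsto (fun x => h2f x / D'' x) (nhdsWithin y {y}ᶜ)
      (nhds (h2f y / (2 * deriv h y))) := hth''.div tD''y h2dy.ne'
  have evD'' : ∀ᶠ x in nhdsWithin y {y}ᶜ, D'' x ≠ 0 :=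
    tD''y.eventually_ne h2dy.ne'
  have evN'der : ∀ᶠ x in nhdsWithin y {y}ᶜ, HasDerivAt N' (h2f x) x := by
    filter_upwards [hIy'] with x hx
    exact (der2 hC2 hx.1).sub_const (deriv h y)
  have evD'der : ∀ᶠ x in nhdsWithin y {y}ᶜ, HasDerivAt D' (D'' x) x := by
    filter_upwards [hIy'] with x hx
    have h1 : HasDerivAt (fun s => deriv h s * (y - s))
        (h2f x * (y - x) + deriv h x * (-1)) x :=
      (der2 hC2 hx.1).mul ((hasDerivAt_id x).const_sub y)
    have h2 : HasDerivAt (fun s => h y - h s) (-(deriv h x)) x :=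
      (der1 hC2 hx.1).const_sub (h y)
    have := h1.neg.sub h2
    refine this.congr_deriv ?_
    simp only [hD'', id_eq]
    ring
  have step1 : Tendsto (fun x => N' x / D' x) (nhdsWithin y {y}ᶜ)
      (nhds (h2f y / (2 * deriv h y))) :=
    HasDerivAt.lhopital_zero_nhdsNE evN'der evD'der evD'' tN' tD' tquot
  have hmo := hmono hC2 hpos
  have evD'ne : ∀ᶠ x in nhdsWithin y {y}ᶜ, D' x ≠ 0 := by
    filter_upwards [hIy'] with x hx
    obtain ⟨hxI, hxy⟩ := hx
    rcases lt_or_gt_of_ne hxy with hlt | hgt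
    · have l1 : 0 < deriv h x * (y - x) := mul_pos (hpos x hxI) (sub_pos.2 hlt)
      have l2 : 0 < h y - h x := sub_pos.2 (hmo hxI hy hlt)
      have : D' x < 0 := by simp only [hD']; linarith
      exact this.ne
    · have l1 : deriv h x * (y - x) < 0 :=
        mul_neg_of_pos_of_neg (hpos x hxI) (sub_neg.2 hgt)
      have l2 : h y - h x < 0 := sub_neg.2 (hmo hy hxI hgt)
      have : 0 < D' x := by simp only [hD']; linarith
      exact this.ne'
  have evNder : ∀ᶠ x in nhdsWithin y {y}ᶜ, HasDerivAt N (N' x) x := by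
    filter_upwards [hIy'] with x hx
    have h1 : HasDerivAt (fun s : ℝ => deriv h y * (y - s)) (deriv h y * (-1)) x :=
      ((hasDerivAt_id x).const_sub y).const_mul (deriv h y)
    have h2 : HasDerivAt (fun s => h y - h s) (-(deriv h x)) x :=
      (der1 hC2 hx.1).const_sub (h y)
    have := h1.sub h2
    refine this.congr_deriv ?_
    simp only [hN', id_eq]
    ring
  have evDder : ∀ᶠ x in nhdsWithin y {y}ᶜ, HasDerivAt D (D' x) x := by
    filter_upwards [hIy'] with x hx
    have h2 : HasDerivAt (fun s => h y - h s) (-(deriv h x)) x :=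
      (der1 hC2 hx.1).const_sub (h y)
    have := h2.mul ((hasDerivAt_id x).const_sub y)
    refine this.congr_deriv ?_
    simp only [hD', id_eq]
    ring
  have step2 : Tendsto (fun x => N x / D x) (nhdsWithin y {y}ᶜ)
      (nhds (h2f y / (2 * deriv h y))) :=
    HasDerivAt.lhopital_zero_nhdsNE evNder evDder evD'ne tN tD step1
  have heq : ∀ᶠ x in nhdsWithin y {y}ᶜ,
      N x / D x = deriv h y / (h y - h x) - 1 / (y - x) := by
    filter_upwards [hIy'] with x hx
    obtain ⟨hxI, hxy⟩ := hx
    have n1 : h y - h x ≠ 0 := hdne hC2 hpos hxI hy hxy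
    have n2 : y - x ≠ 0 := sub_ne_zero.2 (Ne.symm hxy)
    simp only [hN, hD]
    field_simp
  exact step2.congr' heq

/-- Monotonicity (in `x`) of the `y`-partial of `FF`. -/
lemma inner_anti (hC2 : ContDiffOn ℝ 2 h (Set.Ioo p q))
    (hpos : ∀ x ∈ Set.Ioo p q, 0 < deriv h x)
    (hconv : ConvexOn ℝ (Set.Ioo p q) (fun x => 1 / Real.sqrt |deriv h x|))
    {y x₁ x₂ : ℝ} (hy : y ∈ Set.Ioo p q) (h1 : x₁ ∈ Set.Ioo p q)
    (h2 : x₂ ∈ Set.Ioo p q) (h12 : x₁ < x₂) (hn1 : x₁ ≠ y) (hn2 : x₂ ≠ y) :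
    deriv h y / (h y - h x₂) - 1 / (y - x₂) ≤ deriv h y / (h y - h x₁) - 1 / (y - x₁) := by
  set ψ : ℝ → ℝ := fun x => deriv h y / (h y - h x) - 1 / (y - x) with hψ
  have hsubI : Set.Icc x₁ x₂ ⊆ Set.Ioo p q := Set.Icc_subset_Ioo h1.1 h2.2
  have hψder : ∀ x ∈ Set.Ioo p q, x ≠ y → HasDerivAt ψ
      (deriv h y * deriv h x / (h y - h x) ^ 2 - 1 / (y - x) ^ 2) x := by
    intro x hxI hxy
    have hne1 : h y - h x ≠ 0 := hdne hC2 hpos hxI hy hxy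
    have hne2 : y - x ≠ 0 := sub_ne_zero.2 (Ne.symm hxy)
    have d1 : HasDerivAt (fun s => h y - h s) (-(deriv h x)) x :=
      (der1 hC2 hxI).const_sub (h y)
    have d2 := (hasDerivAt_const x (deriv h y)).div d1 hne1
    have d3 : HasDerivAt (fun s : ℝ => y - s) (-1) x := (hasDerivAt_id x).const_sub y
    have d4 := (hasDerivAt_const x (1:ℝ)).div d3 hne2
    have := d2.sub d4
    refine this.congr_deriv ?_
    field_simp
    ring
  have hd0' : ∀ x ∈ Set.Ioo p q, x ≠ y →
      deriv h y * deriv h x / (h y - h x) ^ 2 - 1 / (y - x) ^ 2 ≤ 0 := by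
    intro x hxI hxy
    have hne1 : h y - h x ≠ 0 := hdne hC2 hpos hxI hy hxy
    have hne2 : y - x ≠ 0 := sub_ne_zero.2 (Ne.symm hxy)
    have p1 : 0 < (h y - h x) ^ 2 := sq_pos_of_ne_zero hne1
    have p2 : 0 < (y - x) ^ 2 := sq_pos_of_ne_zero hne2
    rw [sub_nonpos, div_le_div_iff₀ p1 p2]
    nlinarith [keyA2 hC2 hpos hconv hxI hy]
  have hq1 : x₁ ≠ q + 1 := by
    have := h1.2; intro e; rw [e] at this; linarith
  have hq2 : x₂ ≠ q + 1 := by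
    have := h2.2; intro e; rw [e] at this; linarith
  have hyq : y < q + 1 := by linarith [hy.2]
  have := anti2 (f := ψ) (c := x₁) (d := x₂) (t₁ := y) (t₂ := q + 1) h12 hyq
    hn1 hq1 hn2 hq2 ?_ ?_ ?_ ?_ ?_
  · exact this
  · intro x hx hxy _
    have hxI := hsubI hx
    have hne1 : h y - h x ≠ 0 := hdne hC2 hpos hxI hy hxy
    have hne2 : y - x ≠ 0 := sub_ne_zero.2 (Ne.symm hxy)
    have hch : ContinuousAt h x := (der1 hC2 hxI).continuousAt
    exact (continuousAt_const.div (continuousAt_const.sub hch) hne1).sub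
      (continuousAt_const.div (continuousAt_const.sub continuousAt_id) hne2)
  · intro x hx hxy _
    exact (hψder x (hsubI (Set.Ioo_subset_Icc_self hx)) hxy).differentiableAt
  · intro x hx hxy _
    have hh := hψder x (hsubI (Set.Ioo_subset_Icc_self hx)) hxy
    rw [hh.deriv]
    exact hd0' x (hsubI (Set.Ioo_subset_Icc_self hx)) hxy
  · intro _
    exact ⟨_, psi_tendsto hC2 hpos hy⟩
  · intro hmem
    exact absurd hmem.2 (by linarith [h2.2])

/-- derivative of `y ↦ FF h x₀ y`. -/
lemma FF_hasDeriv (hC2 : ContDiffOn ℝ 2 h (Set.Ioo p q))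
    (hpos : ∀ x ∈ Set.Ioo p q, 0 < deriv h x)
    {x0 y : ℝ} (hx0 : x0 ∈ Set.Ioo p q) (hy : y ∈ Set.Ioo p q) (hne : y ≠ x0) :
    HasDerivAt (fun z => FF h x0 z) (deriv h y / (h y - h x0) - 1 / (y - x0)) y := by
  have n2 : y - x0 ≠ 0 := sub_ne_zero.2 hne
  have n1 : h y - h x0 ≠ 0 := hdne hC2 hpos hx0 hy (Ne.symm hne)
  have hq : HasDerivAt (fun z => (h z - h x0) / (z - x0))
      ((deriv h y * (y - x0) - (h y - h x0) * 1) / (y - x0) ^ 2) y :=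
    ((der1 hC2 hy).sub_const (h x0)).div ((hasDerivAt_id y).sub_const x0) n2
  have harg : (h y - h x0) / (y - x0) ≠ 0 := div_ne_zero n1 n2
  have := hq.log harg
  convert this using 1
  · rfl
  field_simp

/-- continuity of `y ↦ FF h x₀ y` away from `x₀`. -/
lemma FF_contAt (hC2 : ContDiffOn ℝ 2 h (Set.Ioo p q))
    (hpos : ∀ x ∈ Set.Ioo p q, 0 < deriv h x)
    {x0 y : ℝ} (hx0 : x0 ∈ Set.Ioo p q) (hy : y ∈ Set.Ioo p q) (hne : y ≠ x0) :
    ContinuousAt (fun z => FF h x0 z) y := by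
  have n2 : y - x0 ≠ 0 := sub_ne_zero.2 hne
  have n1 : h y - h x0 ≠ 0 := hdne hC2 hpos hx0 hy (Ne.symm hne)
  have harg : (h y - h x0) / (y - x0) ≠ 0 := div_ne_zero n1 n2
  have hch : ContinuousAt h y := (der1 hC2 hy).continuousAt
  exact ContinuousAt.log
    (((hch.sub continuousAt_const).div
      (continuousAt_id.sub continuousAt_const) n2)) harg

/-- the slope limit of `FF` at the diagonal. -/
lemma FF_tendsto_diag (hC2 : ContDiffOn ℝ 2 h (Set.Ioo p q))
    (hpos : ∀ x ∈ Set.Ioo p q, 0 < deriv h x)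
    {x0 : ℝ} (hx0 : x0 ∈ Set.Ioo p q) :
    Tendsto (fun z => FF h x0 z) (nhdsWithin x0 {x0}ᶜ)
      (nhds (Real.log (deriv h x0))) := by
  have hs : Tendsto (slope h x0) (nhdsWithin x0 {x0}ᶜ) (nhds (deriv h x0)) :=
    hasDerivAt_iff_tendsto_slope.1 (der1 hC2 hx0)
  have hlog : Tendsto Real.log (nhds (deriv h x0)) (nhds (Real.log (deriv h x0))) :=
    (Real.continuousAt_log (hpos x0 hx0).ne').tendsto
  have := hlog.comp hs
  apply this.congr
  intro z
  simp only [Function.comp_apply, slope_def_field, FF]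

/-- The key submodular inequality for `FF`. -/
lemma F_ineq (hC2 : ContDiffOn ℝ 2 h (Set.Ioo p q))
    (hpos : ∀ x ∈ Set.Ioo p q, 0 < deriv h x)
    (hconv : ConvexOn ℝ (Set.Ioo p q) (fun x => 1 / Real.sqrt |deriv h x|))
    {a b c d : ℝ} (ha : a ∈ Set.Ioo p q) (hb : b ∈ Set.Ioo p q)
    (hc : c ∈ Set.Ioo p q) (hd : d ∈ Set.Ioo p q)
    (hab : a < b) (hcd : c < d)
    (hac : a ≠ c) (had : a ≠ d) (hbc : b ≠ c) (hbd : b ≠ d) :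
    FF h b d + FF h a c ≤ FF h b c + FF h a d := by
  set φ : ℝ → ℝ := fun y => FF h b y - FF h a y with hφ
  have hsubI : Set.Icc c d ⊆ Set.Ioo p q := Set.Icc_subset_Ioo hc.1 hd.2
  have key : φ d ≤ φ c := by
    apply anti2 (f := φ) (c := c) (d := d) (t₁ := a) (t₂ := b) hcd hab
      (Ne.symm hac) (Ne.symm hbc) (Ne.symm had) (Ne.symm hbd)
    · intro y hy hya hyb
      have hyI := hsubI hy
      exact (FF_contAt hC2 hpos hb hyI hyb).sub (FF_contAt hC2 hpos ha hyI hya)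
    · intro y hy hya hyb
      have hyI := hsubI (Set.Ioo_subset_Icc_self hy)
      exact ((FF_hasDeriv hC2 hpos hb hyI hyb).sub
        (FF_hasDeriv hC2 hpos ha hyI hya)).differentiableAt
    · intro y hy hya hyb
      have hyI := hsubI (Set.Ioo_subset_Icc_self hy)
      have hder := (FF_hasDeriv hC2 hpos hb hyI hyb).sub (FF_hasDeriv hC2 hpos ha hyI hya)
      rw [show deriv φ y = _ from hder.deriv]
      have := inner_anti hC2 hpos hconv hyI ha hb hab (Ne.symm hya) (Ne.symm hyb)
      linarith
    · intro hain
      refine ⟨FF h b a - Real.log (deriv h a), ?_⟩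
      have t1 : Tendsto (fun y => FF h b y) (nhdsWithin a {a}ᶜ) (nhds (FF h b a)) :=
        ((FF_contAt hC2 hpos hb ha hab.ne).tendsto).mono_left nhdsWithin_le_nhds
      exact t1.sub (FF_tendsto_diag hC2 hpos ha)
    · intro hbin
      refine ⟨Real.log (deriv h b) - FF h a b, ?_⟩
      have t2 : Tendsto (fun y => FF h a y) (nhdsWithin b {b}ᶜ) (nhds (FF h a b)) :=
        ((FF_contAt hC2 hpos ha hb hab.ne').tendsto).mono_left nhdsWithin_le_nhds
      exact (FF_tendsto_diag hC2 hpos hb).sub t2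
  simp only [hφ] at key
  linarith

/-- decomposition of `log κ` in terms of `FF`. -/
lemma log_kappa (hC2 : ContDiffOn ℝ 2 h (Set.Ioo p q))
    (hpos : ∀ x ∈ Set.Ioo p q, 0 < deriv h x)
    {a b c d : ℝ} (ha : a ∈ Set.Ioo p q) (hb : b ∈ Set.Ioo p q)
    (hc : c ∈ Set.Ioo p q) (hd : d ∈ Set.Ioo p q)
    (hab : a ≠ b) (hac : a ≠ c) (had : a ≠ d) (hbc : b ≠ c) (hbd : b ≠ d) (hcd : c ≠ d) :
    Real.log (kappa h a b c d) = FF h b c + FF h a d - FF h a c - FF h b d := by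
  have n1 : h c - h b ≠ 0 := hdne hC2 hpos hb hc hbc
  have n2 : h d - h a ≠ 0 := hdne hC2 hpos ha hd had
  have n3 : h c - h a ≠ 0 := hdne hC2 hpos ha hc hac
  have n4 : h d - h b ≠ 0 := hdne hC2 hpos hb hd hbd
  have m1 : c - b ≠ 0 := sub_ne_zero.2 (Ne.symm hbc)
  have m2 : d - a ≠ 0 := sub_ne_zero.2 (Ne.symm had)
  have m3 : c - a ≠ 0 := sub_ne_zero.2 (Ne.symm hac)
  have m4 : d - b ≠ 0 := sub_ne_zero.2 (Ne.symm hbd)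
  have e1 : FF h b c = Real.log (h c - h b) - Real.log (c - b) := by
    rw [FF, Real.log_div n1 m1]
  have e2 : FF h a d = Real.log (h d - h a) - Real.log (d - a) := by
    rw [FF, Real.log_div n2 m2]
  have e3 : FF h a c = Real.log (h c - h a) - Real.log (c - a) := by
    rw [FF, Real.log_div n3 m3]
  have e4 : FF h b d = Real.log (h d - h b) - Real.log (d - b) := by
    rw [FF, Real.log_div n4 m4]
  have chi1ne : chi (h a) (h b) (h c) (h d) ≠ 0 := by
    rw [chi]; exact div_ne_zero (mul_ne_zero n1 n2) (mul_ne_zero n3 n4)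
  have chi2ne : chi a b c d ≠ 0 := by
    rw [chi]; exact div_ne_zero (mul_ne_zero m1 m2) (mul_ne_zero m3 m4)
  have echi1 : Real.log (chi (h a) (h b) (h c) (h d)) =
      Real.log (h c - h b) + Real.log (h d - h a)
        - (Real.log (h c - h a) + Real.log (h d - h b)) := by
    rw [chi, Real.log_div (mul_ne_zero n1 n2) (mul_ne_zero n3 n4),
      Real.log_mul n1 n2, Real.log_mul n3 n4]
  have echi2 : Real.log (chi a b c d) =
      Real.log (c - b) + Real.log (d - a) - (Real.log (c - a) + Real.log (d - b)) := by
    rw [chi, Real.log_div (mul_ne_zero m1 m2) (mul_ne_zero m3 m4),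
      Real.log_mul m1 m2, Real.log_mul m3 m4]
  rw [kappa, Real.log_div chi1ne chi2ne, echi1, echi2, e1, e2, e3, e4]
  ring

/-- positivity of `κ`. -/
lemma kappa_pos (hC2 : ContDiffOn ℝ 2 h (Set.Ioo p q))
    (hpos : ∀ x ∈ Set.Ioo p q, 0 < deriv h x)
    {a b c d : ℝ} (ha : a ∈ Set.Ioo p q) (hb : b ∈ Set.Ioo p q)
    (hc : c ∈ Set.Ioo p q) (hd : d ∈ Set.Ioo p q)
    (hab : a ≠ b) (hac : a ≠ c) (had : a ≠ d) (hbc : b ≠ c) (hbd : b ≠ d) (hcd : c ≠ d) :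
    0 < kappa h a b c d := by
  have hmo := hmono hC2 hpos
  have key : ∀ u v : ℝ, u ∈ Set.Ioo p q → v ∈ Set.Ioo p q → u ≠ v →
      0 < (h u - h v) * (u - v) := by
    intro u v hu hv huv
    rcases lt_or_gt_of_ne huv with hlt | hgt
    · exact mul_pos_of_neg_of_neg (sub_neg.2 (hmo hu hv hlt)) (sub_neg.2 hlt)
    · exact mul_pos (sub_pos.2 (hmo hv hu hgt)) (sub_pos.2 hgt)
  have hprod : 0 < chi (h a) (h b) (h c) (h d) * chi a b c d := by
    have e : chi (h a) (h b) (h c) (h d) * chi a b c d =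
        (((h c - h b) * (c - b)) * ((h d - h a) * (d - a))) /
          (((h c - h a) * (c - a)) * ((h d - h b) * (d - b))) := by
      rw [chi, chi, div_mul_div_comm]
      congr 1 <;> ring
    rw [e]
    exact div_pos
      (mul_pos (key c b hc hb (Ne.symm hbc)) (key d a hd ha (Ne.symm had)))
      (mul_pos (key c a hc ha (Ne.symm hac)) (key d b hd hb (Ne.symm hbd)))
  have hchine : chi a b c d ≠ 0 := by
    intro h0
    rw [h0, mul_zero] at hprod
    exact lt_irrefl 0 hprod
  have e2 : kappa h a b c d =
      (chi (h a) (h b) (h c) (h d) * chi a b c d) / (chi a b c d) ^ 2 := by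
    rw [kappa]
    field_simp
  rw [e2]
  exact div_pos hprod (sq_pos_of_ne_zero hchine)

/-- the full conclusion in the increasing case. -/
lemma final_pos (hC2 : ContDiffOn ℝ 2 h (Set.Ioo p q))
    (hpos : ∀ x ∈ Set.Ioo p q, 0 < deriv h x)
    (hconv : ConvexOn ℝ (Set.Ioo p q) (fun x => 1 / Real.sqrt |deriv h x|)) :
    ∀ a b c d : ℝ, a ∈ Set.Ioo p q → b ∈ Set.Ioo p q → c ∈ Set.Ioo p q →
      d ∈ Set.Ioo p q →
      (a ≠ b ∧ a ≠ c ∧ a ≠ d ∧ b ≠ c ∧ b ≠ d ∧ c ≠ d) →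
      ((0 < (b - a) * (d - c) → 1 ≤ kappa h a b c d) ∧
        0 ≤ Real.log (kappa h a b c d) / ((b - a) * (d - c))) := by
  intro a b c d ha hb hc hd hdist
  obtain ⟨hab, hac, had, hbc, hbd, hcd⟩ := hdist
  have hκ := kappa_pos hC2 hpos ha hb hc hd hab hac had hbc hbd hcd
  have hlog := log_kappa hC2 hpos ha hb hc hd hab hac had hbc hbd hcd
  have hnn : 0 < (b - a) * (d - c) → 0 ≤ Real.log (kappa h a b c d) := by
    intro hp
    rcases mul_pos_iff.1 hp with ⟨h1, h2⟩ | ⟨h1, h2⟩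
    · have := F_ineq hC2 hpos hconv ha hb hc hd (sub_pos.1 h1) (sub_pos.1 h2)
        hac had hbc hbd
      rw [hlog]; linarith
    · have := F_ineq hC2 hpos hconv hb ha hd hc (sub_neg.1 h1) (sub_neg.1 h2)
        hbd hbc had hac
      rw [hlog]; linarith
  have hnp : (b - a) * (d - c) < 0 → Real.log (kappa h a b c d) ≤ 0 := by
    intro hp
    rcases mul_neg_iff.1 hp with ⟨h1, h2⟩ | ⟨h1, h2⟩
    · have := F_ineq hC2 hpos hconv ha hb hd hc (sub_pos.1 h1) (sub_neg.1 h2)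
        had hac hbd hbc
      rw [hlog]; linarith
    · have := F_ineq hC2 hpos hconv hb ha hc hd (sub_neg.1 h1) (sub_pos.1 h2)
        hbc hbd hac had
      rw [hlog]; linarith
  constructor
  · intro hp
    exact (Real.log_nonneg_iff hκ).1 (hnn hp)
  · have hne : (b - a) * (d - c) ≠ 0 :=
      mul_ne_zero (sub_ne_zero.2 (Ne.symm hab)) (sub_ne_zero.2 (Ne.symm hcd))
    rcases hne.lt_or_gt with hlt | hgt
    · have h1 := hnp hlt
      have e : Real.log (kappa h a b c d) / ((b - a) * (d - c))
          = (-Real.log (kappa h a b c d)) / (-((b - a) * (d - c))) := by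
        rw [neg_div_neg_eq]
      rw [e]
      exact div_nonneg (by linarith) (by linarith)
    · exact div_nonneg (hnn hgt) hgt.le

end KappaAux

/-- If `h` is a C² diffeomorphism of an open interval such that `1/√|h'|` is
convex, then `κ_h(a,b,c,d) ≥ 1` whenever `(b-a)(d-c) > 0`; equivalently
`ρ_h(a,b,c,d) = log κ_h(a,b,c,d)/((b-a)(d-c)) ≥ 0` for all distinct points. -/
theorem kappa_ge_one_of_convex (p q : ℝ) (h : ℝ → ℝ)
    (hC2 : ContDiffOn ℝ 2 h (Set.Ioo p q))
    (hinj : Set.InjOn h (Set.Ioo p q))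
    (hd : ∀ x ∈ Set.Ioo p q, deriv h x ≠ 0)
    (hconv : ConvexOn ℝ (Set.Ioo p q) (fun x => 1 / Real.sqrt |deriv h x|)) :
    ∀ a b c d : ℝ, a ∈ Set.Ioo p q → b ∈ Set.Ioo p q → c ∈ Set.Ioo p q →
      d ∈ Set.Ioo p q →
      (a ≠ b ∧ a ≠ c ∧ a ≠ d ∧ b ≠ c ∧ b ≠ d ∧ c ≠ d) →
      ((0 < (b - a) * (d - c) → 1 ≤ kappa h a b c d) ∧
        0 ≤ Real.log (kappa h a b c d) / ((b - a) * (d - c))) := by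
  intro a b c d ha hb hc hd4 hdist
  have hd'c : ContinuousOn (deriv h) (Set.Ioo p q) := KappaAux.conth' hC2
  have hsign : (∀ x ∈ Set.Ioo p q, 0 < deriv h x) ∨ (∀ x ∈ Set.Ioo p q, deriv h x < 0) := by
    by_contra hcon
    push_neg at hcon
    obtain ⟨⟨x, hx, hx0⟩, ⟨y, hy', hy0⟩⟩ := hcon
    have hxneg : deriv h x < 0 := lt_of_le_of_ne hx0 (hd x hx)
    have hypos : 0 < deriv h y := lt_of_le_of_ne hy0 (Ne.symm (hd y hy'))
    have hsubI : Set.uIcc x y ⊆ Set.Ioo p q :=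
      (Set.ordConnected_Ioo).uIcc_subset hx hy'
    have hiv := intermediate_value_uIcc (hd'c.mono hsubI)
    have h0mem : (0:ℝ) ∈ Set.uIcc (deriv h x) (deriv h y) :=
      Set.mem_uIcc.2 (Or.inl ⟨hxneg.le, hypos.le⟩)
    obtain ⟨z, hz, hz0⟩ := hiv h0mem
    exact hd z (hsubI hz) hz0
  rcases hsign with hpos | hneg
  · exact KappaAux.final_pos hC2 hpos hconv a b c d ha hb hc hd4 hdist
  · set g : ℝ → ℝ := fun x => -h x with hg
    have hC2g : ContDiffOn ℝ 2 g (Set.Ioo p q) := hC2.neg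
    have hderg : ∀ x : ℝ, deriv g x = -deriv h x := by
      intro x
      simp only [hg]
      exact deriv.neg
    have hposg : ∀ x ∈ Set.Ioo p q, 0 < deriv g x := by
      intro x hx
      rw [hderg]
      linarith [hneg x hx]
    have hconvg : ConvexOn ℝ (Set.Ioo p q) (fun x => 1 / Real.sqrt |deriv g x|) := by
      have e : (fun x => 1 / Real.sqrt |deriv g x|)
          = (fun x => 1 / Real.sqrt |deriv h x|) := by
        funext z
        rw [hderg, abs_neg]
      rw [e]
      exact hconv
    have hkap : kappa g a b c d = kappa h a b c d := by
      have e : ∀ w x y z : ℝ, chi (-w) (-x) (-y) (-z) = chi w x y z := by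
        intro w x y z
        rw [chi, chi]
        congr 1 <;> ring
      rw [kappa, kappa, hg]
      rw [e]
    have := KappaAux.final_pos hC2g hposg hconvg a b c d ha hb hc hd4 hdist
    rwa [hkap] at this
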